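/- For s ≥ 1, t ≥ max{s,3}, c ≥ 1, the recursively defined graph G_s (G_1 a path on c+1 vertices; G_s obtained from c disjoint copies of G_{s−1} plus one dominating vertex) contains no K_{s,t} minor. -/

import Mathlib

open SimpleGraph


/-- `H` is a minor of `G`: there are nonempty, pairwise disjoint, connected branch
sets in `G`, one for each vertex of `H`, with an edge of `G` between the branch
sets of any two adjacent vertices of `H`. -/
def SimpleGraph.IsMinorOf {α β : Type*} (H : SimpleGraph α) (G : SimpleGraph β) : Prop :=
  ∃ B : α → Set β,
    (∀ a, (B a).Nonempty) ∧
    (Pairwise fun a a' => Disjoint (B a) (B a')) ∧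
    (∀ a, (G.induce (B a)).Connected) ∧
    (∀ a a', H.Adj a a' → ∃ u ∈ B a, ∃ w ∈ B a', G.Adj u w)

/-- Add a dominating vertex (the vertex `none`) to a graph. -/
def SimpleGraph.addDominatingVertex {α : Type*} (H : SimpleGraph α) :
    SimpleGraph (Option α) where
  Adj u v :=
    match u, v with
    | none, none => False
    | none, some _ => True
    | some _, none => True
    | some a, some b => H.Adj a b
  symm := by
    constructor
    rintro (_ | a) (_ | b) h <;> simp_all
    exact h.symm
  loopless := by
    constructor
    rintro (_ | a) h <;> simp_all

/-- The disjoint union of `c` copies of a graph. -/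
def SimpleGraph.copies {α : Type*} (c : ℕ) (H : SimpleGraph α) :
    SimpleGraph (Fin c × α) where
  Adj u v := u.1 = v.1 ∧ H.Adj u.2 v.2
  symm := by constructor; rintro ⟨i, a⟩ ⟨j, b⟩ ⟨h1, h2⟩; exact ⟨h1.symm, h2.symm⟩
  loopless := by constructor; rintro ⟨i, a⟩ ⟨-, h⟩; exact H.irrefl h

/-- Vertex type of the recursively defined graph `G_{s+1}`. -/
def GsVertex (c : ℕ) : ℕ → Type
  | 0 => Fin (c + 1)
  | s + 1 => Option (Fin c × GsVertex c s)

/-- The recursively defined graph: `Gs c 0 = G_1` is a path on `c+1` vertices,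
and `Gs c s = G_{s+1}` is obtained from `c` disjoint copies of `Gs c (s-1)` by
adding one dominating vertex. -/
def Gs (c : ℕ) : (s : ℕ) → SimpleGraph (GsVertex c s)
  | 0 => SimpleGraph.pathGraph (c + 1)
  | s + 1 => (SimpleGraph.copies c (Gs c s)).addDominatingVertex

set_option linter.unusedTactic false
set_option linter.unreachableTactic false

lemma minor_mono {α α' β : Type*} {H : SimpleGraph α} {H' : SimpleGraph α'} {G : SimpleGraph β}
    (f : α' → α) (hf : Function.Injective f)
    (hadj : ∀ x y, H'.Adj x y → H.Adj (f x) (f y)) (h : H.IsMinorOf G) : H'.IsMinorOf G := by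
  obtain ⟨B, hne, hdisj, hconn, hedge⟩ := h
  exact ⟨B ∘ f, fun a => hne _, fun a a' haa => hdisj (fun e => haa (hf e)),
    fun a => hconn _, fun a a' h => hedge _ _ (hadj _ _ h)⟩

lemma walk_const {V W : Type*} {G : SimpleGraph V} {f : V → W}
    (h : ∀ x y, G.Adj x y → f x = f y) {u v : V} (p : G.Walk u v) : f u = f v := by
  induction p with
  | nil => rfl
  | cons hadj _ ih => exact (h _ _ hadj).trans ih

/-- connected subsets of the path graph are intervals -/
lemma path_interval {n : ℕ} {S : Set (Fin n)}
    (hconn : ((pathGraph n).induce S).Connected) :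
    ∀ x ∈ S, ∀ y ∈ S, ∀ z, x ≤ z → z ≤ y → z ∈ S := by
  have key : ∀ (u v : S), ∀ (p : ((pathGraph n).induce S).Walk u v),
      ∀ z : Fin n, (u : Fin n) ≤ z → z ≤ (v : Fin n) → z ∈ S := by
    intro u v p
    induction p with
    | @nil a => intro z h1 h2; have hz : z = (a : Fin n) := le_antisymm h2 h1; exact hz ▸ a.2
    | @cons a b c hadj q ih =>
      intro z h1 h2
      rcases eq_or_lt_of_le h1 with rfl | hlt
      · exact a.2
      · apply ih z ?_ h2
        have hadj' : (pathGraph n).Adj (a : Fin n) (b : Fin n) := hadj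
        rw [pathGraph_adj] at hadj'
        have hl := Fin.lt_def.mp hlt
        rw [Fin.le_def]
        rcases hadj' with h | h <;> omega
  intro x hx y hy z h1 h2
  obtain ⟨p⟩ := hconn.preconnected ⟨x, hx⟩ ⟨y, hy⟩
  exact key _ _ p z h1 h2

/-- the side lemma: an edge between two disjoint intervals pins down the configuration -/
lemma side_lemma {n : ℕ} {L R : Set (Fin n)}
    (hL : ∀ x ∈ L, ∀ y ∈ L, ∀ z : Fin n, x ≤ z → z ≤ y → z ∈ L)
    (hR : ∀ x ∈ R, ∀ y ∈ R, ∀ z : Fin n, x ≤ z → z ≤ y → z ∈ R)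
    (hdisj : Disjoint L R) {u w : Fin n} (hu : u ∈ L) (hw : w ∈ R)
    (hadj : (pathGraph n).Adj u w) :
    ((w : ℕ) = u + 1 ∧ (∀ x ∈ L, x ≤ u) ∧ (∀ y ∈ R, w ≤ y)) ∨
    ((u : ℕ) = w + 1 ∧ (∀ x ∈ L, u ≤ x) ∧ (∀ y ∈ R, y ≤ w)) := by
  have hdisj' : ∀ z, z ∈ L → z ∈ R → False := fun z h1 h2 =>
    Set.disjoint_left.mp hdisj h1 h2
  rw [pathGraph_adj] at hadj
  rcases hadj with h | h
  · left
    refine ⟨h.symm, ?_, ?_⟩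
    · intro x hx
      by_contra hc
      push_neg at hc
      have hwx : w ≤ x := by rw [Fin.le_def]; have := Fin.lt_def.mp hc; omega
      exact hdisj' w (hL u hu x hx w (by rw [Fin.le_def]; omega) hwx) hw
    · intro y hy
      by_contra hc
      push_neg at hc
      have hyu : y ≤ u := by rw [Fin.le_def]; have := Fin.lt_def.mp hc; omega
      exact hdisj' u hu (hR y hy w hw u hyu (by rw [Fin.le_def]; omega))
  · right
    refine ⟨h.symm, ?_, ?_⟩
    · intro x hx
      by_contra hc
      push_neg at hc
      have hxw : x ≤ w := by rw [Fin.le_def]; have := Fin.lt_def.mp hc; omega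
      exact hdisj' w (hL x hx u hu w hxw (by rw [Fin.le_def]; omega)) hw
    · intro y hy
      by_contra hc
      push_neg at hc
      have huy : u ≤ y := by rw [Fin.le_def]; have := Fin.lt_def.mp hc; omega
      exact hdisj' u hu (hR w hw y hy u (by rw [Fin.le_def]; omega) huy)

lemma same_side_rr {n : ℕ} {L R1 R2 : Set (Fin n)} {u1 u2 w1 w2 : Fin n}
    (hu1 : u1 ∈ L) (hu2 : u2 ∈ L) (hw1 : w1 ∈ R1) (hw2 : w2 ∈ R2)
    (h1 : (w1 : ℕ) = u1 + 1) (h2 : (w2 : ℕ) = u2 + 1)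
    (b1 : ∀ x ∈ L, x ≤ u1) (b2 : ∀ x ∈ L, x ≤ u2) (hd : Disjoint R1 R2) : False := by
  have he : u1 = u2 := le_antisymm (b2 u1 hu1) (b1 u2 hu2)
  subst he
  have : w1 = w2 := Fin.ext (by omega)
  exact Set.disjoint_left.mp hd hw1 (this ▸ hw2)

lemma same_side_ll {n : ℕ} {L R1 R2 : Set (Fin n)} {u1 u2 w1 w2 : Fin n}
    (hu1 : u1 ∈ L) (hu2 : u2 ∈ L) (hw1 : w1 ∈ R1) (hw2 : w2 ∈ R2)
    (h1 : (u1 : ℕ) = w1 + 1) (h2 : (u2 : ℕ) = w2 + 1)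
    (b1 : ∀ x ∈ L, u1 ≤ x) (b2 : ∀ x ∈ L, u2 ≤ x) (hd : Disjoint R1 R2) : False := by
  have he : u1 = u2 := le_antisymm (b1 u2 hu2) (b2 u1 hu1)
  subst he
  have : w1 = w2 := Fin.ext (by omega)
  exact Set.disjoint_left.mp hd hw1 (this ▸ hw2)

lemma path_no_K13 {n : ℕ} :
    ¬ (completeBipartiteGraph (Fin 1) (Fin 3)).IsMinorOf (pathGraph n) := by
  rintro ⟨B, hne, hdisj, hconn, hedge⟩
  have hI : ∀ x, ∀ a ∈ B x, ∀ b ∈ B x, ∀ z : Fin n, a ≤ z → z ≤ b → z ∈ B x :=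
    fun x => path_interval (hconn x)
  obtain ⟨u0, hu0, w0, hw0, ha0⟩ := hedge (Sum.inl 0) (Sum.inr 0) (by simp)
  obtain ⟨u1, hu1, w1, hw1, ha1⟩ := hedge (Sum.inl 0) (Sum.inr 1) (by simp)
  obtain ⟨u2, hu2, w2, hw2, ha2⟩ := hedge (Sum.inl 0) (Sum.inr 2) (by simp)
  have s0 := side_lemma (hI _) (hI _) (hdisj (show (Sum.inl 0 : Fin 1 ⊕ Fin 3) ≠ Sum.inr 0 by simp)) hu0 hw0 ha0
  have s1 := side_lemma (hI _) (hI _) (hdisj (show (Sum.inl 0 : Fin 1 ⊕ Fin 3) ≠ Sum.inr 1 by simp)) hu1 hw1 ha1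
  have s2 := side_lemma (hI _) (hI _) (hdisj (show (Sum.inl 0 : Fin 1 ⊕ Fin 3) ≠ Sum.inr 2 by simp)) hu2 hw2 ha2
  have d01 : Disjoint (B (Sum.inr 0)) (B (Sum.inr 1)) := hdisj (by simp)
  have d02 : Disjoint (B (Sum.inr 0)) (B (Sum.inr 2)) := hdisj (by simp [show (0:Fin 3) ≠ 2 by decide])
  have d12 : Disjoint (B (Sum.inr 1)) (B (Sum.inr 2)) := hdisj (by simp [show (1:Fin 3) ≠ 2 by decide])
  rcases s0 with ⟨e0, l0, r0⟩ | ⟨e0, l0, r0⟩ <;>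
    rcases s1 with ⟨e1, l1, r1⟩ | ⟨e1, l1, r1⟩ <;>
      rcases s2 with ⟨e2, l2, r2⟩ | ⟨e2, l2, r2⟩ <;>
        first
          | exact same_side_rr hu0 hu1 hw0 hw1 e0 e1 l0 l1 d01
          | exact same_side_rr hu0 hu2 hw0 hw2 e0 e2 l0 l2 d02
          | exact same_side_rr hu1 hu2 hw1 hw2 e1 e2 l1 l2 d12
          | exact same_side_ll hu0 hu1 hw0 hw1 e0 e1 l0 l1 d01
          | exact same_side_ll hu0 hu2 hw0 hw2 e0 e2 l0 l2 d02
          | exact same_side_ll hu1 hu2 hw1 hw2 e1 e2 l1 l2 d12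

lemma path_no_K22 {n : ℕ} :
    ¬ (completeBipartiteGraph (Fin 2) (Fin 2)).IsMinorOf (pathGraph n) := by
  rintro ⟨B, hne, hdisj, hconn, hedge⟩
  have hI : ∀ x, ∀ a ∈ B x, ∀ b ∈ B x, ∀ z : Fin n, a ≤ z → z ≤ b → z ∈ B x :=
    fun x => path_interval (hconn x)
  obtain ⟨u11, hu11, w11, hw11, ha11⟩ := hedge (Sum.inl 0) (Sum.inr 0) (by simp)
  obtain ⟨u12, hu12, w12, hw12, ha12⟩ := hedge (Sum.inl 0) (Sum.inr 1) (by simp)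
  obtain ⟨u21, hu21, w21, hw21, ha21⟩ := hedge (Sum.inl 1) (Sum.inr 0) (by simp)
  obtain ⟨u22, hu22, w22, hw22, ha22⟩ := hedge (Sum.inl 1) (Sum.inr 1) (by simp)
  have s11 := side_lemma (hI _) (hI _) (hdisj (show (Sum.inl 0 : Fin 2 ⊕ Fin 2) ≠ Sum.inr 0 by simp)) hu11 hw11 ha11
  have s12 := side_lemma (hI _) (hI _) (hdisj (show (Sum.inl 0 : Fin 2 ⊕ Fin 2) ≠ Sum.inr 1 by simp)) hu12 hw12 ha12
  have s21 := side_lemma (hI _) (hI _) (hdisj (show (Sum.inl 1 : Fin 2 ⊕ Fin 2) ≠ Sum.inr 0 by simp)) hu21 hw21 ha21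
  have s22 := side_lemma (hI _) (hI _) (hdisj (show (Sum.inl 1 : Fin 2 ⊕ Fin 2) ≠ Sum.inr 1 by simp)) hu22 hw22 ha22
  have dR : Disjoint (B (Sum.inr 0)) (B (Sum.inr 1)) := hdisj (by simp)
  have dL : Disjoint (B (Sum.inl 0)) (B (Sum.inl 1)) := hdisj (by simp)
  rcases s11 with ⟨e11, l11, r11⟩ | ⟨e11, l11, r11⟩ <;>
    rcases s12 with ⟨e12, l12, r12⟩ | ⟨e12, l12, r12⟩ <;>
      rcases s21 with ⟨e21, l21, r21⟩ | ⟨e21, l21, r21⟩ <;>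
        rcases s22 with ⟨e22, l22, r22⟩ | ⟨e22, l22, r22⟩ <;>
          first
            | exact same_side_rr hu11 hu12 hw11 hw12 e11 e12 l11 l12 dR
            | exact same_side_ll hu11 hu12 hw11 hw12 e11 e12 l11 l12 dR
            | exact same_side_rr hu21 hu22 hw21 hw22 e21 e22 l21 l22 dR
            | exact same_side_ll hu21 hu22 hw21 hw22 e21 e22 l21 l22 dR
            | exact same_side_ll hw11 hw21 hu11 hu21 e11 e21 r11 r21 dL
            | exact same_side_rr hw11 hw21 hu11 hu21 e11 e21 r11 r21 dL
            | exact same_side_ll hw12 hw22 hu12 hu22 e12 e22 r12 r22 dL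
            | exact same_side_rr hw12 hw22 hu12 hu22 e12 e22 r12 r22 dL
            | (have i1 := Fin.le_def.mp (r12 w22 hw22)
               have i2 := Fin.le_def.mp (l11 u12 hu12)
               have i3 := Fin.le_def.mp (r21 w11 hw11)
               have i4 := Fin.le_def.mp (l22 u21 hu21)
               omega)
            | (have i1 := Fin.le_def.mp (r11 w21 hw21)
               have i2 := Fin.le_def.mp (l21 u22 hu22)
               have i3 := Fin.le_def.mp (r22 w12 hw12)
               have i4 := Fin.le_def.mp (l12 u11 hu11)
               omega)

lemma addDom_adj_some {α : Type*} {H : SimpleGraph α} {a b : α} :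
    (H.addDominatingVertex).Adj (some a) (some b) ↔ H.Adj a b := Iff.rfl

/-- A connected set avoiding the dominating vertex lives in one copy,
and projects to a connected set there. -/
lemma copy_lemma {V : Type*} {c : ℕ} (hc : 0 < c) {H : SimpleGraph V}
    {S : Set (Option (Fin c × V))} (hnone : none ∉ S) (hne : S.Nonempty)
    (hconn : (((H.copies c).addDominatingVertex).induce S).Connected) :
    ∃ i : Fin c, ∃ T : Set V, T.Nonempty ∧ (H.induce T).Connected ∧
      S = (fun a => some (i, a)) '' T := by
  classical
  obtain ⟨x0, hx0⟩ := hne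
  obtain ⟨p0, hp0⟩ : ∃ p, x0 = some p := by
    cases x0 with
    | none => exact absurd hx0 hnone
    | some p => exact ⟨p, rfl⟩
  subst hp0
  obtain ⟨i, a0⟩ := p0
  set G' := (H.copies c).addDominatingVertex with hG'
  -- projection to the copy index
  let π : Option (Fin c × V) → Fin c := fun o => o.elim ⟨0, hc⟩ Prod.fst
  have hπ : ∀ x y : S, (G'.induce S).Adj x y → π x.1 = π y.1 := by
    rintro ⟨x, hx⟩ ⟨y, hy⟩ hadj
    have hax : G'.Adj x y := hadj
    cases x with
    | none => exact absurd hx hnone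
    | some px =>
      cases y with
      | none => exact absurd hy hnone
      | some py =>
        have : (H.copies c).Adj px py := hax
        exact this.1
  have hsame : ∀ x ∈ S, ∃ a, x = some (i, a) := by
    intro x hx
    obtain ⟨p⟩ := hconn.preconnected ⟨some (i, a0), hx0⟩ ⟨x, hx⟩
    have := walk_const hπ p
    cases x with
    | none => exact absurd hx hnone
    | some p' =>
      refine ⟨p'.2, ?_⟩
      have h2 : i = p'.1 := this
      rw [h2]
  set T : Set V := {a | some (i, a) ∈ S} with hT
  have hST : S = (fun a => some (i, a)) '' T := by
    ext x
    constructor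
    · intro hx
      obtain ⟨a, rfl⟩ := hsame x hx
      exact ⟨a, hx, rfl⟩
    · rintro ⟨a, ha, rfl⟩
      exact ha
  -- the hom from induce S to induce T
  have hmemT : ∀ x : S, (x.1.elim a0 Prod.snd) ∈ T := by
    rintro ⟨x, hx⟩
    obtain ⟨a, rfl⟩ := hsame x hx
    exact hx
  let φ : (G'.induce S) →g (H.induce T) := by
    refine ⟨fun x => ⟨x.1.elim a0 Prod.snd, hmemT x⟩, ?_⟩
    rintro ⟨x, hx⟩ ⟨y, hy⟩ hadj
    obtain ⟨a, rfl⟩ := hsame x hx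
    obtain ⟨b, rfl⟩ := hsame y hy
    have : (H.copies c).Adj (i, a) (i, b) := hadj
    exact this.2
  haveI : Nonempty ↑T := ⟨⟨a0, hx0⟩⟩
  refine ⟨i, T, ⟨a0, hx0⟩, ⟨?_⟩, hST⟩
  intro a b
  obtain ⟨p⟩ := hconn.preconnected ⟨some (i, a.1), a.2⟩ ⟨some (i, b.1), b.2⟩
  have := Reachable.map φ ⟨p⟩
  have ea : φ ⟨some (i, a.1), a.2⟩ = a := Subtype.ext rfl
  have eb : φ ⟨some (i, b.1), b.2⟩ = b := Subtype.ext rfl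
  rwa [ea, eb] at this

lemma CBG_mono {a b a' b' : ℕ} (ha : a' ≤ a) (hb : b' ≤ b) {β : Type*} {G : SimpleGraph β}
    (h : (completeBipartiteGraph (Fin a) (Fin b)).IsMinorOf G) :
    (completeBipartiteGraph (Fin a') (Fin b')).IsMinorOf G := by
  refine minor_mono (Sum.map (Fin.castLE ha) (Fin.castLE hb)) ?_ ?_ h
  · exact Function.Injective.sumMap (Fin.castLE_injective _) (Fin.castLE_injective _)
  · intro x y hxy
    cases x <;> cases y <;> simp_all

lemma CBG_swap {a b : ℕ} {β : Type*} {G : SimpleGraph β}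
    (h : (completeBipartiteGraph (Fin a) (Fin b)).IsMinorOf G) :
    (completeBipartiteGraph (Fin b) (Fin a)).IsMinorOf G := by
  refine minor_mono Sum.swap (fun x y h => by simpa using congrArg Sum.swap h) ?_ h
  intro x y hxy
  cases x <;> cases y <;> simp_all

lemma step_extract {c k : ℕ} (hc : 0 < c) {a b : ℕ} (ha : 0 < a) (hb : 0 < b)
    {B : Fin a ⊕ Fin b → Set (Option (Fin c × GsVertex c k))}
    (hne : ∀ x, (B x).Nonempty)
    (hdisj : Pairwise fun x y => Disjoint (B x) (B y))
    (hconn : ∀ x, (((SimpleGraph.copies c (Gs c k)).addDominatingVertex).induce (B x)).Connected)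
    (hedge : ∀ x y, (completeBipartiteGraph (Fin a) (Fin b)).Adj x y →
      ∃ u ∈ B x, ∃ w ∈ B y, ((SimpleGraph.copies c (Gs c k)).addDominatingVertex).Adj u w)
    (hnone : ∀ x, none ∉ B x) :
    (completeBipartiteGraph (Fin a) (Fin b)).IsMinorOf (Gs c k) := by
  choose ι T hTne hTconn hST using fun x => copy_lemma hc (hnone x) (hne x) (hconn x)
  have key : ∀ x y, (completeBipartiteGraph (Fin a) (Fin b)).Adj x y →
      ι x = ι y ∧ ∃ p ∈ T x, ∃ q ∈ T y, (Gs c k).Adj p q := by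
    intro x y hxy
    obtain ⟨u, hu, w, hw, huw⟩ := hedge x y hxy
    rw [hST x] at hu; rw [hST y] at hw
    obtain ⟨p, hp, rfl⟩ := hu
    obtain ⟨q, hq, rfl⟩ := hw
    have h2 : (SimpleGraph.copies c (Gs c k)).Adj (ι x, p) (ι y, q) := huw
    exact ⟨h2.1, p, hp, q, hq, h2.2⟩
  set x1 : Fin a ⊕ Fin b := Sum.inl ⟨0, ha⟩ with hx1
  set y1 : Fin a ⊕ Fin b := Sum.inr ⟨0, hb⟩ with hy1
  have hι : ∀ x, ι x = ι y1 := by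
    intro x
    cases x with
    | inl p => exact (key _ y1 (by simp [hy1])).1
    | inr q => exact ((key x1 _ (by simp [hx1])).1.symm.trans (key x1 y1 (by simp [hx1, hy1])).1)
  refine ⟨T, hTne, ?_, fun x => hTconn x, ?_⟩
  · intro x y hxy
    rw [Set.disjoint_left]
    intro p hpx hpy
    have h1 : some (ι x, p) ∈ B x := by rw [hST x]; exact ⟨p, hpx, rfl⟩
    have h2 : some (ι y, p) ∈ B y := by rw [hST y]; exact ⟨p, hpy, rfl⟩
    rw [hι x] at h1; rw [hι y] at h2
    exact Set.disjoint_left.mp (hdisj hxy) h1 h2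
  · intro x y hxy
    obtain ⟨-, p, hp, q, hq, h⟩ := key x y hxy
    exact ⟨p, hp, q, hq, h⟩

lemma main_ind (c : ℕ) (hc : 0 < c) :
    ∀ k t, max (k + 1) 3 ≤ t →
      ¬ (completeBipartiteGraph (Fin (k + 1)) (Fin t)).IsMinorOf (Gs c k) := by
  intro k
  induction k with
  | zero =>
    intro t ht hmin
    have h13 : (completeBipartiteGraph (Fin 1) (Fin 3)).IsMinorOf (Gs c 0) :=
      CBG_mono le_rfl (by omega) hmin
    exact path_no_K13 h13
  | succ k ih =>
    intro t ht hmin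
    obtain ⟨B, hne, hdisj, hconn, hedge⟩ := hmin
    have hconn' : ∀ x, (((SimpleGraph.copies c (Gs c k)).addDominatingVertex).induce (B x)).Connected := hconn
    have hedge' : ∀ x y, (completeBipartiteGraph (Fin (k + 2)) (Fin t)).Adj x y →
        ∃ u ∈ B x, ∃ w ∈ B y, ((SimpleGraph.copies c (Gs c k)).addDominatingVertex).Adj u w := hedge
    by_cases hn : ∃ x, none ∈ B x
    · obtain ⟨x0, hx0⟩ := hn
      have hnone : ∀ x, x ≠ x0 → none ∉ B x := fun x hx h =>
        Set.disjoint_left.mp (hdisj hx) h hx0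
      cases x0 with
      | inl a0 =>
        set f : Fin (k + 1) ⊕ Fin t → Fin (k + 2) ⊕ Fin t := Sum.map a0.succAbove id with hf
        have finj : Function.Injective f :=
          Function.Injective.sumMap (Fin.succAbove_right_injective) Function.injective_id
        have hfne : ∀ x, f x ≠ Sum.inl a0 := by
          rintro (p | q) h
          · exact Fin.succAbove_ne a0 p (by simpa [hf] using h)
          · simp [hf] at h
        have h' : (completeBipartiteGraph (Fin (k + 1)) (Fin t)).IsMinorOf (Gs c k) := by
          refine step_extract hc (by omega) (by omega)
            (fun x => hne (f x)) (fun x y hxy => hdisj (fun e => hxy (finj e)))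
            (fun x => hconn' (f x)) ?_ (fun x => hnone (f x) (hfne x))
          intro x y hxy
          refine hedge' (f x) (f y) ?_
          rcases x with p | p <;> rcases y with q | q <;> simpa [hf] using hxy
        exact ih t (by omega) h'
      | inr b0 =>
        obtain ⟨t', rfl⟩ : ∃ t', t = t' + 1 := ⟨t - 1, by omega⟩
        set f : Fin (k + 2) ⊕ Fin t' → Fin (k + 2) ⊕ Fin (t' + 1) := Sum.map id b0.succAbove with hf
        have finj : Function.Injective f :=
          Function.Injective.sumMap Function.injective_id (Fin.succAbove_right_injective)
        have hfne : ∀ x, f x ≠ Sum.inr b0 := by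
          rintro (p | q) h
          · simp [hf] at h
          · exact Fin.succAbove_ne b0 q (by simpa [hf] using h)
        have h' : (completeBipartiteGraph (Fin (k + 2)) (Fin t')).IsMinorOf (Gs c k) := by
          refine step_extract hc (by omega) (by omega)
            (fun x => hne (f x)) (fun x y hxy => hdisj (fun e => hxy (finj e)))
            (fun x => hconn' (f x)) ?_ (fun x => hnone (f x) (hfne x))
          intro x y hxy
          refine hedge' (f x) (f y) ?_
          rcases x with p | p <;> rcases y with q | q <;> simpa [hf] using hxy
        by_cases h4 : 4 ≤ t' + 1
        · exact ih t' (by omega) (CBG_mono (by omega) le_rfl h')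
        · have ht3 : t' = 2 := by omega
          subst ht3
          have hk : k = 0 ∨ k = 1 := by omega
          rcases hk with rfl | rfl
          · exact path_no_K22 h'
          · exact ih 3 (by norm_num) (CBG_swap h')
    · push_neg at hn
      have h' : (completeBipartiteGraph (Fin (k + 2)) (Fin t)).IsMinorOf (Gs c k) :=
        step_extract hc (by omega) (by omega) hne hdisj hconn' hedge' hn
      exact ih t (by omega) (CBG_mono (by omega) le_rfl h')

/-- For `s ≥ 1`, `t ≥ max{s,3}`, `c ≥ 1`, the recursively defined
graph `G_s` contains no `K_{s,t}` minor. -/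
theorem Gs_no_Kst_minor (s t c : ℕ) (hs : 1 ≤ s) (ht : max s 3 ≤ t) (hc : 1 ≤ c) :
    ¬ (completeBipartiteGraph (Fin s) (Fin t)).IsMinorOf (Gs c (s - 1)) := by
  obtain ⟨k, rfl⟩ : ∃ k, s = k + 1 := ⟨s - 1, by omega⟩
  have : k + 1 - 1 = k := by omega
  rw [this]
  exact main_ind c hc k t (by omega)
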